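/- arXiv:2207.11654 — 2 statements merged into one kernel-verified Lean document; each statement's English description precedes it below -/
import Mathlib

section
/- A matching produced by the deferred-acceptance procedure admits no blocking pair: there do not exist a medical center C and a miner M such that C is matched to some miner M' ≠ M and C strictly prefers M to M' while M strictly prefers C to (one of) its matched center(s). Formally, for the Gale–Shapley stable matching between two finite sets with strict linear preference orders, the output matching is stable. -/
/-! Deferred acceptance (Gale–Shapley) between medical centers (proposers) and miners
(acceptors), each with strict preferences given by injective rank functions
(lower rank = more preferred). We implement the algorithm and state that its output
matching admits no blocking pair. -/

/-- State of the deferred-acceptance procedure: the current (tentative) partial matching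
of proposers to acceptors, and the set of acceptors each proposer has already proposed
to. -/
structure GSState (n s : ℕ) where
  matched : Fin n → Option (Fin s)
  proposed : Fin n → Finset (Fin s)

/-- The proposer currently (tentatively) held by acceptor `a`, if any. -/
def gsHolder {n s : ℕ} (st : GSState n s) (a : Fin s) : Option (Fin n) :=
  (List.finRange n).find? (fun q => decide (st.matched q = some a))

/-- One step of deferred acceptance: some unmatched proposer with remaining candidates
proposes to its most-preferred acceptor not yet proposed to; the acceptor tentatively
keeps its favorite of its current holder and the new proposer and rejects the other. -/
def gsStep {n s : ℕ} (prefP : Fin n → Fin s → ℕ) (prefA : Fin s → Fin n → ℕ)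
    (st : GSState n s) : GSState n s :=
  let cands := fun p => (List.finRange s).filter (fun a => decide (a ∉ st.proposed p))
  match (List.finRange n).find?
      (fun p => decide (st.matched p = none) && !(cands p).isEmpty) with
  | none => st
  | some p =>
    match (cands p).argmin (prefP p) with
    | none => st
    | some a =>
      let st' : GSState n s :=
        { matched := st.matched,
          proposed := fun q => if q = p then insert a (st.proposed q) else st.proposed q }
      match gsHolder st a with
      | none => { st' with matched := Function.update st'.matched p (some a) }
      | some q =>
        if prefA a p < prefA a q then
          { st' with matched := fun r => if r = p then some a
                                         else if r = q then none else st.matched r }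
        else st'

/-- Iterate the deferred-acceptance step. -/
def gsRun {n s : ℕ} (prefP : Fin n → Fin s → ℕ) (prefA : Fin s → Fin n → ℕ) :
    ℕ → GSState n s → GSState n s
  | 0, st => st
  | k + 1, st => gsRun prefP prefA k (gsStep prefP prefA st)

/-- The matching output by the Gale–Shapley deferred-acceptance algorithm
(at most `n·s` proposals are ever made, so `n·s + 1` steps suffice). -/
def galeShapley (n s : ℕ) (prefP : Fin n → Fin s → ℕ) (prefA : Fin s → Fin n → ℕ) :
    Fin n → Option (Fin s) :=
  (gsRun prefP prefA (n * s + 1) ⟨fun _ => none, fun _ => ∅⟩).matched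

/-- `(p, a)` is a blocking pair for the partial matching `μ`: they are not matched
together, `p` is unmatched or strictly prefers `a` to its current miner, and `a` is
unmatched or strictly prefers `p` to its current center. -/
def BlockingPair {n s : ℕ} (prefP : Fin n → Fin s → ℕ) (prefA : Fin s → Fin n → ℕ)
    (μ : Fin n → Option (Fin s)) (p : Fin n) (a : Fin s) : Prop :=
  μ p ≠ some a ∧
    (μ p = none ∨ ∃ b, μ p = some b ∧ prefP p a < prefP p b) ∧
    ((∀ q, μ q ≠ some a) ∨ ∃ q, μ q = some a ∧ prefA a p < prefA a q)

/- ### Auxiliary development for the stability proof -/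

section Aux

variable {n s : ℕ} (prefP : Fin n → Fin s → ℕ) (prefA : Fin s → Fin n → ℕ)

/-- The invariant maintained by deferred acceptance. -/
def GSInv (st : GSState n s) : Prop :=
  (∀ (a : Fin s) (p q : Fin n), st.matched p = some a → st.matched q = some a → p = q) ∧
  (∀ (p : Fin n) (a : Fin s), a ∈ st.proposed p → st.matched p ≠ some a →
      ∃ q, st.matched q = some a ∧ prefA a q < prefA a p) ∧
  (∀ (p : Fin n) (b : Fin s), st.matched p = some b →
      b ∈ st.proposed p ∧ ∀ a, a ∉ st.proposed p → prefP p b ≤ prefP p a)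

lemma gsHolder_some {st : GSState n s} {a : Fin s} {q : Fin n}
    (h : gsHolder st a = some q) : st.matched q = some a := by
  have := List.find?_some h
  simpa using this

lemma gsHolder_none {st : GSState n s} {a : Fin s}
    (h : gsHolder st a = none) : ∀ q, st.matched q ≠ some a := by
  intro q
  have := List.find?_eq_none.mp h q (List.mem_finRange q)
  simpa using this

lemma gsInv_step (hA : ∀ a, Function.Injective (prefA a)) {st : GSState n s}
    (h : GSInv prefP prefA st) : GSInv prefP prefA (gsStep prefP prefA st) := by
  obtain ⟨h1, h2, h3⟩ := h
  unfold gsStep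
  dsimp only
  cases hf : (List.finRange n).find?
      (fun p => decide (st.matched p = none) &&
        !((List.finRange s).filter (fun a => decide (a ∉ st.proposed p))).isEmpty) with
  | none => exact ⟨h1, h2, h3⟩
  | some p =>
    dsimp only
    have hfp := List.find?_some hf
    simp only [Bool.and_eq_true, decide_eq_true_eq, Bool.not_eq_true',
      List.isEmpty_eq_false_iff, List.isEmpty_iff] at hfp
    have hpnone : st.matched p = none := hfp.1
    cases ha : ((List.finRange s).filter (fun a => decide (a ∉ st.proposed p))).argmin (prefP p) with
    | none => exact ⟨h1, h2, h3⟩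
    | some a =>
      dsimp only
      have hamem : a ∉ st.proposed p := by
        have := List.argmin_mem ha
        simp only [List.mem_filter, decide_eq_true_eq] at this
        exact this.2
      have hamin : ∀ a', a' ∉ st.proposed p → prefP p a ≤ prefP p a' := by
        intro a' ha'
        refine List.le_of_mem_argmin ?_ ha
        simp [List.mem_filter, ha']
      cases hh : gsHolder st a with
      | none =>
        dsimp only
        have hnone := gsHolder_none hh
        refine ⟨?_, ?_, ?_⟩ <;> dsimp only
        · intro a' p1 q1 hp1 hq1
          rw [Function.update_apply] at hp1 hq1
          by_cases e1 : p1 = p <;> by_cases e2 : q1 = p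
          · rw [e1, e2]
          · rw [if_pos e1] at hp1; rw [if_neg e2] at hq1
            injection hp1 with hx; subst hx
            exact absurd hq1 (hnone q1)
          · rw [if_neg e1] at hp1; rw [if_pos e2] at hq1
            injection hq1 with hx; subst hx
            exact absurd hp1 (hnone p1)
          · rw [if_neg e1] at hp1; rw [if_neg e2] at hq1
            exact h1 a' p1 q1 hp1 hq1
        · intro r a' hmem hne
          rw [Function.update_apply] at hne
          by_cases hr : r = p
          · subst hr
            rw [if_pos rfl] at hne
            rw [if_pos rfl, Finset.mem_insert] at hmem
            rcases hmem with rfl | hmem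
            · exact absurd rfl hne
            · obtain ⟨q, hq, hlt⟩ := h2 r a' hmem (by rw [hpnone]; simp)
              have hqr : q ≠ r := by rintro rfl; rw [hpnone] at hq; exact absurd hq (by simp)
              exact ⟨q, by rw [Function.update_apply, if_neg hqr]; exact hq, hlt⟩
          · rw [if_neg hr] at hne
            rw [if_neg hr] at hmem
            obtain ⟨q, hq, hlt⟩ := h2 r a' hmem hne
            have hqp : q ≠ p := by rintro rfl; rw [hpnone] at hq; exact absurd hq (by simp)
            exact ⟨q, by rw [Function.update_apply, if_neg hqp]; exact hq, hlt⟩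
        · intro r b hrb
          rw [Function.update_apply] at hrb
          by_cases hr : r = p
          · subst hr
            rw [if_pos rfl] at hrb
            injection hrb with hba
            subst hba
            refine ⟨by rw [if_pos rfl]; exact Finset.mem_insert_self _ _, ?_⟩
            intro a' ha'
            rw [if_pos rfl, Finset.mem_insert, not_or] at ha'
            exact hamin a' ha'.2
          · rw [if_neg hr] at hrb
            obtain ⟨hb1, hb2⟩ := h3 r b hrb
            refine ⟨by rw [if_neg hr]; exact hb1, ?_⟩
            intro a' ha'
            rw [if_neg hr] at ha'
            exact hb2 a' ha'
      | some q =>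
        dsimp only
        have hq : st.matched q = some a := gsHolder_some hh
        have hqp : q ≠ p := by rintro rfl; rw [hpnone] at hq; exact absurd hq (by simp)
        by_cases hcmp : prefA a p < prefA a q
        · rw [if_pos hcmp]
          refine ⟨?_, ?_, ?_⟩ <;> dsimp only
          · intro a' p1 q1 hp1 hq1
            by_cases e1 : p1 = p <;> by_cases e2 : q1 = p
            · rw [e1, e2]
            · rw [if_pos e1] at hp1
              rw [if_neg e2] at hq1
              injection hp1 with hx; subst hx
              by_cases e3 : q1 = q
              · rw [if_pos e3] at hq1; exact absurd hq1 (by simp)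
              · rw [if_neg e3] at hq1
                exact absurd (h1 a q1 q hq1 hq) e3
            · rw [if_pos e2] at hq1
              rw [if_neg e1] at hp1
              injection hq1 with hx; subst hx
              by_cases e3 : p1 = q
              · rw [if_pos e3] at hp1; exact absurd hp1 (by simp)
              · rw [if_neg e3] at hp1
                exact absurd (h1 a p1 q hp1 hq) e3
            · rw [if_neg e1] at hp1
              rw [if_neg e2] at hq1
              by_cases e3 : p1 = q
              · rw [if_pos e3] at hp1; exact absurd hp1 (by simp)
              by_cases e4 : q1 = q
              · rw [if_pos e4] at hq1; exact absurd hq1 (by simp)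
              rw [if_neg e3] at hp1
              rw [if_neg e4] at hq1
              exact h1 a' p1 q1 hp1 hq1
          · intro r a' hmem hne
            by_cases haa : a' = a
            · subst haa
              refine ⟨p, by rw [if_pos rfl], ?_⟩
              by_cases hrp : r = p
              · subst hrp; rw [if_pos rfl] at hne; exact absurd rfl hne
              · by_cases hrq : r = q
                · subst hrq; exact hcmp
                · rw [if_neg hrp] at hmem
                  have hrold : st.matched r ≠ some a' := by
                    intro hc; exact hrq (h1 a' r q hc hq)
                  obtain ⟨q', hq', hlt⟩ := h2 r a' hmem hrold
                  have : q' = q := h1 a' q' q hq' hq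
                  subst this
                  exact lt_trans hcmp hlt
            · have hmem' : a' ∈ st.proposed r := by
                by_cases hrp : r = p
                · rw [hrp, if_pos rfl, Finset.mem_insert] at hmem
                  rcases hmem with rfl | hmem
                  · exact absurd rfl haa
                  · rw [hrp]; exact hmem
                · rwa [if_neg hrp] at hmem
              have hold : st.matched r ≠ some a' := by
                by_cases hrp : r = p
                · rw [hrp, hpnone]; simp
                · by_cases hrq : r = q
                  · rw [hrq, hq]; intro hc; injection hc with hc; exact haa hc.symm
                  · rw [if_neg hrp, if_neg hrq] at hne; exact hne
              obtain ⟨q', hq', hlt⟩ := h2 r a' hmem' hold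
              have hq'p : q' ≠ p := by rintro rfl; rw [hpnone] at hq'; exact absurd hq' (by simp)
              have hq'q : q' ≠ q := by
                rintro rfl; rw [hq] at hq'; injection hq' with hc; exact haa hc.symm
              exact ⟨q', by rw [if_neg hq'p, if_neg hq'q]; exact hq', hlt⟩
          · intro r b hrb
            by_cases hrp : r = p
            · subst hrp
              rw [if_pos rfl] at hrb
              injection hrb with hba; subst hba
              refine ⟨by rw [if_pos rfl]; exact Finset.mem_insert_self _ _, ?_⟩
              intro a' ha'
              rw [if_pos rfl, Finset.mem_insert, not_or] at ha'
              exact hamin a' ha'.2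
            · rw [if_neg hrp] at hrb
              by_cases hrq : r = q
              · rw [if_pos hrq] at hrb; exact absurd hrb (by simp)
              · rw [if_neg hrq] at hrb
                obtain ⟨hb1, hb2⟩ := h3 r b hrb
                refine ⟨by rw [if_neg hrp]; exact hb1, ?_⟩
                intro a' ha'
                rw [if_neg hrp] at ha'
                exact hb2 a' ha'
        · rw [if_neg hcmp]
          have hqlt : prefA a q < prefA a p := by
            have hne : prefA a q ≠ prefA a p := fun hc => hqp (hA a hc)
            omega
          refine ⟨h1, ?_, ?_⟩ <;> dsimp only
          · intro r a' hmem hne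
            by_cases hrp : r = p
            · subst hrp
              rw [if_pos rfl, Finset.mem_insert] at hmem
              rcases hmem with rfl | hmem
              · exact ⟨q, hq, hqlt⟩
              · exact h2 r a' hmem hne
            · rw [if_neg hrp] at hmem
              exact h2 r a' hmem hne
          · intro r b hrb
            have hrp : r ≠ p := by rintro rfl; rw [hpnone] at hrb; exact absurd hrb (by simp)
            obtain ⟨hb1, hb2⟩ := h3 r b hrb
            refine ⟨by rw [if_neg hrp]; exact hb1, ?_⟩
            intro a' ha'
            rw [if_neg hrp] at ha'
            exact hb2 a' ha'

/-- Total number of proposals made so far. -/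
def gsMeasure (st : GSState n s) : ℕ := ∑ p : Fin n, (st.proposed p).card

def GSTerminal (st : GSState n s) : Prop :=
  (List.finRange n).find?
      (fun p => decide (st.matched p = none) &&
        !((List.finRange s).filter (fun a => decide (a ∉ st.proposed p))).isEmpty) = none

lemma gsStep_eq_of_terminal {st : GSState n s} (ht : GSTerminal st) :
    gsStep prefP prefA st = st := by
  unfold gsStep
  dsimp only
  rw [ht]

lemma gsRun_eq_of_terminal {st : GSState n s} (ht : GSTerminal st) (k : ℕ) :
    gsRun prefP prefA k st = st := by
  induction k with
  | zero => rfl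
  | succ k ih => rw [gsRun, gsStep_eq_of_terminal prefP prefA ht, ih]

lemma gsMeasure_le (st : GSState n s) : gsMeasure st ≤ n * s := by
  calc gsMeasure st ≤ ∑ _p : Fin n, s :=
        Finset.sum_le_sum (fun p _ => by
          simpa using Finset.card_le_card (Finset.subset_univ (st.proposed p)))
    _ = n * s := by simp [Finset.sum_const]

lemma gsMeasure_step {st : GSState n s} (ht : ¬ GSTerminal st) :
    gsMeasure st + 1 ≤ gsMeasure (gsStep prefP prefA st) := by
  unfold GSTerminal at ht
  unfold gsStep
  dsimp only
  cases hf : (List.finRange n).find?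
      (fun p => decide (st.matched p = none) &&
        !((List.finRange s).filter (fun a => decide (a ∉ st.proposed p))).isEmpty) with
  | none => exact absurd hf ht
  | some p =>
    dsimp only
    have hfp := List.find?_some hf
    simp only [Bool.and_eq_true, decide_eq_true_eq, Bool.not_eq_true',
      List.isEmpty_eq_false_iff] at hfp
    cases ha : ((List.finRange s).filter (fun a => decide (a ∉ st.proposed p))).argmin (prefP p) with
    | none => exact absurd (List.argmin_eq_none.mp ha) hfp.2
    | some a =>
      dsimp only
      have hamem : a ∉ st.proposed p := by
        have := List.argmin_mem ha
        simp only [List.mem_filter, decide_eq_true_eq] at this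
        exact this.2
      have key : ∀ (m : Fin n → Option (Fin s)),
          gsMeasure st + 1 ≤ gsMeasure (GSState.mk m
            (fun q => if q = p then insert a (st.proposed q) else st.proposed q)) := by
        intro m
        have hlt : gsMeasure st < gsMeasure (GSState.mk m
            (fun q => if q = p then insert a (st.proposed q) else st.proposed q)) := by
          refine Finset.sum_lt_sum (fun q _ => ?_) ⟨p, Finset.mem_univ p, ?_⟩
          · by_cases hq : q = p
            · subst hq
              simp [Finset.card_insert_of_notMem hamem]
            · simp [hq]
          · simp [Finset.card_insert_of_notMem hamem]
        omega
      cases hh : gsHolder st a with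
      | none => exact key _

      | some q =>
        dsimp only
        by_cases hcmp : prefA a p < prefA a q
        · rw [if_pos hcmp]; exact key _
        · rw [if_neg hcmp]; exact key _

lemma gsRun_terminal (k : ℕ) (st : GSState n s) (hk : n * s < gsMeasure st + k) :
    GSTerminal (gsRun prefP prefA k st) := by
  induction k generalizing st with
  | zero =>
    exact absurd (gsMeasure_le st) (by omega)
  | succ k ih =>
    by_cases ht : GSTerminal st
    · rw [gsRun, gsStep_eq_of_terminal prefP prefA ht, gsRun_eq_of_terminal prefP prefA ht]
      exact ht
    · rw [gsRun]
      refine ih _ ?_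
      have := gsMeasure_step prefP prefA ht (st := st)
      omega

lemma gsInv_run (hA : ∀ a, Function.Injective (prefA a)) (k : ℕ) {st : GSState n s}
    (h : GSInv prefP prefA st) : GSInv prefP prefA (gsRun prefP prefA k st) := by
  induction k generalizing st with
  | zero => exact h
  | succ k ih => exact ih (gsInv_step prefP prefA hA h)

end Aux

/-- The matching produced by deferred acceptance admits no blocking pair: there is no
center–miner pair that would both strictly prefer each other over their assignments. -/
theorem galeShapley_stable (n s : ℕ)
    (prefP : Fin n → Fin s → ℕ) (prefA : Fin s → Fin n → ℕ)
    (hP : ∀ p, Function.Injective (prefP p))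
    (hA : ∀ a, Function.Injective (prefA a)) :
    ∀ p a, ¬ BlockingPair prefP prefA (galeShapley n s prefP prefA) p a := by
  intro p a hbp
  set st0 : GSState n s := ⟨fun _ => none, fun _ => ∅⟩ with hst0
  set stF := gsRun prefP prefA (n * s + 1) st0 with hstF
  have hinv0 : GSInv prefP prefA st0 := by
    refine ⟨?_, ?_, ?_⟩ <;> intro x y <;> simp [hst0]
  have hinv : GSInv prefP prefA stF := gsInv_run prefP prefA hA _ hinv0
  obtain ⟨h1, h2, h3⟩ := hinv
  have hterm : GSTerminal stF := by
    refine gsRun_terminal prefP prefA _ _ ?_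
    have : gsMeasure st0 = 0 := by simp [gsMeasure, hst0]
    omega
  -- from terminality: any unmatched proposer has proposed to everyone
  have hfull : ∀ q : Fin n, stF.matched q = none → ∀ b : Fin s, b ∈ stF.proposed q := by
    intro q hq b
    have := List.find?_eq_none.mp hterm q (List.mem_finRange q)
    simp only [Bool.and_eq_true, decide_eq_true_eq, Bool.not_eq_true',
      List.isEmpty_eq_false_iff, not_and, not_not] at this
    by_contra hb
    have hmem : b ∈ (List.finRange s).filter (fun a => decide (a ∉ stF.proposed q)) := by
      simp [List.mem_filter, hb]
    rw [this hq] at hmem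
    exact absurd hmem List.not_mem_nil
  have hμ : galeShapley n s prefP prefA = stF.matched := rfl
  obtain ⟨hne, hpref, hacc⟩ := hbp
  rw [hμ] at hne hpref hacc
  by_cases hmem : a ∈ stF.proposed p
  · -- p proposed to a and is not matched to a: a holds someone better
    obtain ⟨q, hq, hlt⟩ := h2 p a hmem hne
    rcases hacc with hall | ⟨q', hq', hlt'⟩
    · exact hall q hq
    · have : q' = q := h1 a q' q hq' hq
      subst this
      omega
  · -- p never proposed to a: p is matched to someone it prefers over a
    rcases hpref with hnonem | ⟨b, hb, hblt⟩
    · exact hmem (hfull p hnonem a)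
    · have := (h3 p b hb).2 a hmem
      omega
end

section
/- In a one-to-one deferred-acceptance setting with n proposers and n acceptors each holding strict preferences, a stable matching always exists (the Gale–Shapley algorithm terminates with a matching that has no blocking pair). -/
/-- `PropTo prefP crossed q a` : `a` is `q`'s current proposal, i.e. `a` is the most
preferred acceptor among those `q` has not crossed off. -/
def PropTo {n : ℕ} (prefP : Fin n → Fin n → ℕ)
    (crossed : Fin n → Finset (Fin n)) (q a : Fin n) : Prop :=
  a ∈ (crossed q)ᶜ ∧ ∀ b ∈ (crossed q)ᶜ, prefP q a ≤ prefP q b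

lemma propTo_unique {n : ℕ} {prefP : Fin n → Fin n → ℕ}
    (hP : ∀ p, Function.Injective (prefP p)) {crossed : Fin n → Finset (Fin n)}
    {q a b : Fin n}
    (h1 : PropTo prefP crossed q a) (h2 : PropTo prefP crossed q b) : a = b :=
  hP q (le_antisymm (h1.2 b h2.1) (h2.2 a h1.1))

lemma gs_aux {n : ℕ} (prefP prefA : Fin n → Fin n → ℕ)
    (hP : ∀ p, Function.Injective (prefP p))
    (hA : ∀ a, Function.Injective (prefA a)) :
    ∀ k (crossed : Fin n → Finset (Fin n)),
      (∑ p, ((crossed p)ᶜ : Finset (Fin n)).card) ≤ k →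
      (∀ p, ∀ a ∈ crossed p, ∃ q, PropTo prefP crossed q a ∧ prefA a q < prefA a p) →
      ∃ μ : Fin n ≃ Fin n, ∀ p a : Fin n,
        ¬ (prefP p a < prefP p (μ p) ∧ prefA a p < prefA a (μ.symm a)) := by
  intro k
  induction k using Nat.strong_induction_on with
  | _ k IH =>
  intro crossed hk hinv
  -- every proposer still has an uncrossed acceptor
  have hne : ∀ p, ((crossed p)ᶜ : Finset (Fin n)).Nonempty := by
    intro p
    by_contra hemp
    rw [Finset.not_nonempty_iff_eq_empty] at hemp
    have hall : ∀ b : Fin n, b ∈ crossed p := by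
      intro b
      by_contra hb
      have : b ∈ (crossed p)ᶜ := Finset.mem_compl.mpr hb
      rw [hemp] at this
      exact absurd this (Finset.notMem_empty b)
    choose g hg _ using fun b => hinv p b (hall b)
    have ginj : Function.Injective g := by
      intro b b' h
      exact propTo_unique hP (hg b) (by rw [h]; exact hg b')
    obtain ⟨b, hb⟩ := (Finite.injective_iff_surjective.mp ginj) p
    have hmem := (hg b).1
    rw [hb, hemp] at hmem
    exact absurd hmem (Finset.notMem_empty b)
  -- the current proposal function
  have hex : ∀ p, ∃ a, PropTo prefP crossed p a := by
    intro p
    obtain ⟨a, ha, hmin⟩ := Finset.exists_min_image _ (prefP p) (hne p)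
    exact ⟨a, ha, hmin⟩
  choose f hf using hex
  by_cases hinj : Function.Injective f
  · -- no rejections: `f` is the stable matching
    have hbij : Function.Bijective f := ⟨hinj, Finite.injective_iff_surjective.mp hinj⟩
    refine ⟨Equiv.ofBijective f hbij, ?_⟩
    rintro p a ⟨h1, h2⟩
    have hμp : (Equiv.ofBijective f hbij) p = f p := rfl
    rw [hμp] at h1
    have hac : a ∈ crossed p := by
      by_contra hac
      exact absurd ((hf p).2 a (Finset.mem_compl.mpr hac)) (not_le.mpr h1)
    obtain ⟨q, hq, hql⟩ := hinv p a hac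
    have hfq : f q = a := propTo_unique hP (hf q) hq
    have hsymm : (Equiv.ofBijective f hbij).symm a = q := by
      rw [Equiv.symm_apply_eq]
      exact hfq.symm
    rw [hsymm] at h2
    exact lt_asymm hql h2
  · -- some acceptor rejects one of two proposers
    rw [Function.not_injective_iff] at hinj
    obtain ⟨p1, p2, hfe, hne12⟩ := hinj
    have key : ∀ r q0 : Fin n, f q0 = f r → prefA (f r) q0 < prefA (f r) r →
        ∃ μ : Fin n ≃ Fin n, ∀ p a : Fin n,
          ¬ (prefP p a < prefP p (μ p) ∧ prefA a p < prefA a (μ.symm a)) := by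
      intro r q0 hfq0 hlt0
      set a := f r with ha
      set crossed' := Function.update crossed r (insert a (crossed r)) with hc'
      have hcr : ∀ p, p ≠ r → crossed' p = crossed p := by
        intro p hp
        simp [hc', Function.update_of_ne hp]
      have hcrr : crossed' r = insert a (crossed r) := by
        simp [hc']
      have hq0r : q0 ≠ r := by
        intro h
        rw [h] at hlt0
        exact lt_irrefl _ hlt0
      have hq0' : PropTo prefP crossed' q0 a := by
        have h := hf q0
        rw [hfq0] at h
        have hcc : crossed' q0 = crossed q0 := hcr q0 hq0r
        unfold PropTo at h ⊢
        rw [hcc]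
        exact h
      have hamem : a ∈ (crossed r)ᶜ := (hf r).1
      -- invariant is preserved
      have hinv' : ∀ p, ∀ b ∈ crossed' p,
          ∃ q, PropTo prefP crossed' q b ∧ prefA b q < prefA b p := by
        intro p b hb
        have old : b ∈ crossed p → ∃ q, PropTo prefP crossed' q b ∧ prefA b q < prefA b p := by
          intro hbp
          obtain ⟨q, hq, hql⟩ := hinv p b hbp
          by_cases hqr : q = r
          · -- b is r's current proposal, i.e. b = a; use q0 instead
            subst hqr
            have hba : b = a := propTo_unique hP hq (hf q)
            subst hba
            exact ⟨q0, hq0', lt_trans hlt0 hql⟩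
          · refine ⟨q, ?_, hql⟩
            have hcc : crossed' q = crossed q := hcr q hqr
            unfold PropTo at hq ⊢
            rw [hcc]
            exact hq
        by_cases hpr : p = r
        · subst hpr
          rw [hcrr, Finset.mem_insert] at hb
          rcases hb with hb | hb
          · subst hb
            exact ⟨q0, hq0', hlt0⟩
          · exact old hb
        · rw [hcr p hpr] at hb
          exact old hb
      -- the total size of complements strictly decreases
      have hsum : (∑ p, ((crossed' p)ᶜ : Finset (Fin n)).card)
          < ∑ p, ((crossed p)ᶜ : Finset (Fin n)).card := by
        apply Finset.sum_lt_sum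
        · intro i _
          by_cases hir : i = r
          · subst hir
            rw [hcrr, Finset.compl_insert]
            exact Finset.card_le_card (Finset.erase_subset _ _)
          · rw [hcr i hir]
        · refine ⟨r, Finset.mem_univ r, ?_⟩
          rw [hcrr, Finset.compl_insert]
          exact Finset.card_erase_lt_of_mem hamem
      exact IH _ (lt_of_lt_of_le hsum hk) crossed' le_rfl hinv'
    rcases lt_trichotomy (prefA (f p1) p1) (prefA (f p1) p2) with hlt | heq | hgt
    · refine key p2 p1 hfe ?_
      rw [← hfe]
      exact hlt
    · exact absurd (hA (f p1) heq) hne12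
    · exact key p1 p2 hfe.symm hgt


/-- Classical stable marriage: with `n` proposers and `n` acceptors, each holding strict
preferences (injective rank functions, lower rank = more preferred), a stable matching
(a bijection admitting no blocking pair) always exists. A blocking pair `(p, a)` for
the bijection `μ` is a pair with `p` preferring `a` to `μ p` and `a` preferring `p` to
`μ⁻¹ a`. -/
theorem stable_matching_exists (n : ℕ)
    (prefP : Fin n → Fin n → ℕ) (prefA : Fin n → Fin n → ℕ)
    (hP : ∀ p, Function.Injective (prefP p))
    (hA : ∀ a, Function.Injective (prefA a)) :
    ∃ μ : Fin n ≃ Fin n, ∀ p a : Fin n,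
      ¬ (prefP p a < prefP p (μ p) ∧ prefA a p < prefA a (μ.symm a)) := by
  exact gs_aux prefP prefA hP hA _ (fun _ => ∅) le_rfl (by simp)
end
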